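/- Let L be a reduced 1-compact compactly generated multiplicative lattice and x ∈ L. If x* is maximal among the set {a* : a ∈ L, a* ≠ 1}, then x* is a prime element of L. -/

import Mathlib

variable {α : Type*}

/-- Iterated product `a^n` in a multiplicative lattice (with `a^0 = ⊤`). -/
def mpow [CompleteLattice α] (mul : α → α → α) (a : α) : ℕ → α
  | 0 => ⊤
  | n + 1 => mul a (mpow mul a n)

/-- `mul` makes the complete lattice `α` into a multiplicative lattice. -/
def IsMulLattice [CompleteLattice α] (mul : α → α → α) : Prop :=
  (∀ a b : α, mul a b = mul b a) ∧
  (∀ a b c : α, mul (mul a b) c = mul a (mul b c)) ∧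
  (∀ (a : α) (s : Set α), mul a (sSup s) = ⨆ b ∈ s, mul a b) ∧
  (∀ a b : α, mul a b ≤ a ⊓ b) ∧
  (∀ a : α, mul a ⊤ = a)

/-- The multiplicative lattice is reduced: the only nilpotent element is `⊥`. -/
def LatReduced [CompleteLattice α] (mul : α → α → α) : Prop :=
  ∀ (a : α) (n : ℕ), mpow mul a (n + 1) = ⊥ → a = ⊥

/-- `a* = sup {x | x·a = 0}`. -/
def starAnn [CompleteLattice α] (mul : α → α → α) (a : α) : α :=
  sSup {x : α | mul x a = ⊥}

/-- A prime element of a multiplicative lattice. -/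
def IsPrimeElt [CompleteLattice α] (mul : α → α → α) (p : α) : Prop :=
  p ≠ ⊤ ∧ ∀ a b : α, mul a b ≤ p → a ≤ p ∨ b ≤ p

/-- The zero-divisor graph `Γᵐ(L)` of a multiplicative lattice. -/
def zdg [CompleteLattice α] (mul : α → α → α) : SimpleGraph α where
  Adj a b := a ≠ b ∧ a ≠ ⊥ ∧ b ≠ ⊥ ∧ mul a b = ⊥ ∧ mul b a = ⊥
  symm := ⟨fun a b h => ⟨h.1.symm, h.2.2.1, h.2.1, h.2.2.2.2, h.2.2.2.1⟩⟩
  loopless := ⟨fun a h => h.1 rfl⟩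

/-- `Clique(Γᵐ(L)) < ∞`. -/
def CliqueBounded [CompleteLattice α] (mul : α → α → α) : Prop :=
  ∃ N : ℕ, ∀ s : Finset α, (zdg mul).IsClique ↑s → s.card ≤ N

theorem maximal_annihilator_is_prime [CompleteLattice α] [IsCompactlyGenerated α]
    (mul : α → α → α) (hL : IsMulLattice mul) (hred : LatReduced mul)
    (htop : IsCompactElement (⊤ : α)) (x : α)
    (hne : starAnn mul x ≠ ⊤)
    (hmax : ∀ a : α, starAnn mul a ≠ ⊤ → starAnn mul x ≤ starAnn mul a →
      starAnn mul x = starAnn mul a) :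
    IsPrimeElt mul (starAnn mul x) := by
  obtain ⟨comm, assoc, dist, hinf, hone⟩ := hL
  have hbot : ∀ a : α, mul a ⊥ = ⊥ := by
    intro a
    have h := dist a ∅
    simpa using h
  have hmono : ∀ a b c : α, b ≤ c → mul a b ≤ mul a c := by
    intro a b c hbc
    have h := dist a {b, c}
    rw [sSup_pair, sup_eq_right.mpr hbc] at h
    rw [h]
    exact le_iSup₂_of_le b (by simp) le_rfl
  have hstar_ann : ∀ a : α, mul (starAnn mul a) a = ⊥ := by
    intro a
    rw [comm, starAnn, dist]
    apply le_bot_iff.mp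
    apply iSup₂_le
    intro y hy
    rw [comm]
    exact le_of_eq hy
  have hstar_top : ∀ a : α, starAnn mul a = ⊤ → a = ⊥ := by
    intro a ha
    obtain ⟨t, hts, hle⟩ := (CompleteLattice.isCompactElement_iff_exists_le_sSup_of_le_sSup (k := (⊤ : α))).mp htop {y | mul y a = ⊥} (by show ⊤ ≤ starAnn mul a; rw [ha])
    have hsup : mul (sSup ↑t) a = ⊥ := by
      rw [comm, dist]
      apply le_bot_iff.mp
      apply iSup₂_le
      intro y hy
      rw [comm]
      exact le_of_eq (hts hy)
    have h2 : mul ⊤ a ≤ ⊥ := by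
      calc mul ⊤ a = mul a ⊤ := comm _ _
        _ ≤ mul a (sSup ↑t) := hmono a _ _ (by rwa [Finset.sup_id_eq_sSup] at hle)
        _ = mul (sSup ↑t) a := comm _ _
        _ = ⊥ := hsup
    have : a = mul ⊤ a := by rw [comm, hone]
    rw [this]
    exact le_bot_iff.mp h2
  refine ⟨hne, ?_⟩
  intro a b hab
  by_cases ha : a ≤ starAnn mul x
  · exact Or.inl ha
  · right
    have hax : mul a x ≠ ⊥ := fun h => ha (le_sSup h)
    have h1 : starAnn mul (mul a x) ≠ ⊤ := fun h => hax (hstar_top _ h)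
    have h2 : starAnn mul x ≤ starAnn mul (mul a x) := by
      apply sSup_le
      intro y hy
      apply le_sSup
      show mul y (mul a x) = ⊥
      rw [← assoc, comm y a, assoc, hy, hbot]
    have hbmem : mul b (mul a x) = ⊥ := by
      have hle : mul (mul a b) x ≤ ⊥ := by
        calc mul (mul a b) x = mul x (mul a b) := comm _ _
          _ ≤ mul x (starAnn mul x) := hmono x _ _ hab
          _ = mul (starAnn mul x) x := comm _ _
          _ = ⊥ := hstar_ann x
      have e : mul (mul a b) x = mul b (mul a x) := by
        rw [comm a b, assoc]
      rw [← e]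
      exact le_bot_iff.mp hle
    rw [hmax _ h1 h2]
    exact le_sSup hbmem
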